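/- Let Π be an orthogonal projection of rank r with ‖Π‖_{q→2} ≤ κ for q > 2. Then any vector v in the range of Π satisfies ‖v‖_{q*} ≤ κ‖v‖_2, and the entry-wise ℓ_{q*} norm of Π satisfies ‖Π‖_{q*} ≤ r·κ². -/

import Mathlib

open scoped BigOperators
open Matrix

noncomputable def lpNorm {n : ℕ} (p : ℝ) (v : Fin n → ℝ) : ℝ :=
  (∑ i, |v i| ^ p) ^ (1 / p)

noncomputable def opNorm {m n : ℕ} (p q : ℝ) (A : Matrix (Fin m) (Fin n) ℝ) : ℝ :=
  sSup {t : ℝ | ∃ v : Fin n → ℝ, v ≠ 0 ∧ t = lpNorm q (A.mulVec v) / lpNorm p v}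

noncomputable def frobSq {m n : ℕ} (A : Matrix (Fin m) (Fin n) ℝ) : ℝ :=
  ∑ i, ∑ j, (A i j) ^ 2

open Finset in
lemma lp_sum_le {ι α : Type*} [Fintype α] (s : Finset ι) (f : ι → α → ℝ) {p : ℝ} (hp : 1 ≤ p) :
    (∑ a, |∑ i ∈ s, f i a| ^ p) ^ (1/p) ≤ ∑ i ∈ s, (∑ a, |f i a| ^ p) ^ (1/p) := by
  induction s using Finset.cons_induction with
  | empty =>
    simp [Real.zero_rpow (by positivity : p ≠ 0), Real.zero_rpow (by positivity : (1:ℝ)/p ≠ 0), Real.zero_rpow (by positivity : p⁻¹ ≠ 0)]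
  | cons i s hi ih =>
    simp only [Finset.sum_cons]
    calc (∑ a, |f i a + ∑ j ∈ s, f j a| ^ p) ^ (1/p)
        ≤ (∑ a, |f i a| ^ p) ^ (1/p) + (∑ a, |∑ j ∈ s, f j a| ^ p) ^ (1/p) :=
          Real.Lp_add_le _ _ _ hp
      _ ≤ _ := by gcongr

lemma trace_eq_rank {n : ℕ} (P : Matrix (Fin n) (Fin n) ℝ) (hidem : P * P = P) :
    Matrix.trace P = (P.rank : ℝ) := by
  have hproj : LinearMap.IsProj (LinearMap.range P.mulVecLin) P.mulVecLin := by
    constructor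
    · intro x; exact LinearMap.mem_range_self _ x
    · rintro x ⟨y, rfl⟩
      rw [← LinearMap.comp_apply, ← Matrix.mulVecLin_mul, hidem]
  have h := hproj.trace
  rw [Matrix.rank]
  rw [← h]
  rw [LinearMap.trace_eq_matrix_trace ℝ (Pi.basisFun ℝ (Fin n))]
  congr 1
  rw [LinearMap.toMatrix_eq_toMatrix']
  rw [show P.mulVecLin = Matrix.toLin' P from rfl, LinearMap.toMatrix'_toLin']


lemma lpNorm_nonneg {n : ℕ} (p : ℝ) (v : Fin n → ℝ) : 0 ≤ lpNorm p v := by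
  unfold lpNorm
  positivity

lemma lpNorm_pos {n : ℕ} {p : ℝ} (hp : 0 < p) {v : Fin n → ℝ} (hv : v ≠ 0) :
    0 < lpNorm p v := by
  obtain ⟨j, hj⟩ : ∃ j, v j ≠ 0 := by
    by_contra h; push_neg at h; exact hv (funext h)
  unfold lpNorm
  apply Real.rpow_pos_of_pos
  have h1 : (0:ℝ) < |v j| ^ p := Real.rpow_pos_of_pos (abs_pos.mpr hj) p
  calc (0:ℝ) < |v j| ^ p := h1
    _ ≤ ∑ i, |v i| ^ p :=
      Finset.single_le_sum (f := fun i => |v i| ^ p) (fun i _ => by positivity)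
        (Finset.mem_univ j)

lemma abs_le_lpNorm {n : ℕ} {p : ℝ} (hp : 0 < p) (v : Fin n → ℝ) (j : Fin n) :
    |v j| ≤ lpNorm p v := by
  have h1 : |v j| = (|v j| ^ p) ^ (1/p) := by
    rw [← Real.rpow_mul (abs_nonneg _)]
    rw [mul_one_div, div_self (ne_of_gt hp), Real.rpow_one]
  rw [h1]
  unfold lpNorm
  apply Real.rpow_le_rpow (by positivity) _ (by positivity)
  exact Finset.single_le_sum (f := fun i => |v i| ^ p) (fun i _ => by positivity)
    (Finset.mem_univ j)

lemma lpNorm_mulVec_le {n : ℕ} {q : ℝ} (hq : 0 < q) (P : Matrix (Fin n) (Fin n) ℝ)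
    (v : Fin n → ℝ) :
    lpNorm 2 (P.mulVec v) ≤ ((n:ℝ) ^ ((1:ℝ)/2) * ∑ i, ∑ j, |P i j|) * lpNorm q v := by
  set M0 := ∑ i, ∑ j, |P i j| with hM0
  set L := lpNorm q v with hL
  have hM0n : 0 ≤ M0 := Finset.sum_nonneg fun i _ => Finset.sum_nonneg fun j _ => abs_nonneg _
  have hLn : 0 ≤ L := lpNorm_nonneg _ _
  have hbound : ∀ i, |P.mulVec v i| ≤ M0 * L := by
    intro i
    calc |P.mulVec v i| = |∑ j, P i j * v j| := rfl
      _ ≤ ∑ j, |P i j * v j| := Finset.abs_sum_le_sum_abs _ _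
      _ = ∑ j, |P i j| * |v j| := by simp [abs_mul]
      _ ≤ ∑ j, |P i j| * L := Finset.sum_le_sum fun j _ =>
          mul_le_mul_of_nonneg_left (abs_le_lpNorm hq v j) (abs_nonneg _)
      _ = (∑ j, |P i j|) * L := by rw [Finset.sum_mul]
      _ ≤ M0 * L := by
          apply mul_le_mul_of_nonneg_right _ hLn
          exact Finset.single_le_sum (f := fun i => ∑ j, |P i j|)
            (fun i _ => Finset.sum_nonneg fun j _ => abs_nonneg _) (Finset.mem_univ i)
  unfold lpNorm
  calc (∑ i, |P.mulVec v i| ^ (2:ℝ)) ^ (1/(2:ℝ))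
      ≤ (∑ _i : Fin n, (M0 * L) ^ (2:ℝ)) ^ (1/(2:ℝ)) := by
        apply Real.rpow_le_rpow (Finset.sum_nonneg fun i _ => by positivity)
        · exact Finset.sum_le_sum fun i _ =>
            Real.rpow_le_rpow (abs_nonneg _) (hbound i) (by norm_num)
        · norm_num
    _ = ((n:ℝ) * (M0 * L) ^ (2:ℝ)) ^ (1/(2:ℝ)) := by simp [Finset.sum_const, mul_comm]
    _ = (n:ℝ) ^ ((1:ℝ)/2) * (M0 * L) := by
        rw [Real.mul_rpow (Nat.cast_nonneg n) (by positivity)]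
        rw [← Real.rpow_mul (by positivity)]
        norm_num
    _ = (n:ℝ) ^ ((1:ℝ)/2) * M0 * L := by ring

lemma opNorm_apply_le {n : ℕ} {q κ : ℝ} (hq : 0 < q) (P : Matrix (Fin n) (Fin n) ℝ)
    (hκ : opNorm q 2 P ≤ κ) {v : Fin n → ℝ} (hv : v ≠ 0) :
    lpNorm 2 (P.mulVec v) ≤ κ * lpNorm q v := by
  set S := {t : ℝ | ∃ v : Fin n → ℝ, v ≠ 0 ∧ t = lpNorm 2 (P.mulVec v) / lpNorm q v} with hS
  set C := (n:ℝ) ^ ((1:ℝ)/2) * ∑ i, ∑ j, |P i j| with hC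
  have hbdd : BddAbove S := by
    refine ⟨C, fun t ht => ?_⟩
    obtain ⟨w, hw, rfl⟩ := ht
    rw [div_le_iff₀ (lpNorm_pos hq hw)]
    exact lpNorm_mulVec_le hq P w
  have hmem : lpNorm 2 (P.mulVec v) / lpNorm q v ∈ S := ⟨v, hv, rfl⟩
  have h1 : lpNorm 2 (P.mulVec v) / lpNorm q v ≤ κ :=
    le_trans (le_csSup hbdd hmem) hκ
  rw [div_le_iff₀ (lpNorm_pos hq hv)] at h1
  exact h1

lemma mySign_mul_self (x : ℝ) : Real.sign x * x = |x| := by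
  rcases lt_trichotomy x 0 with h|h|h
  · rw [Real.sign_of_neg h, abs_of_neg h]; ring
  · simp [h]
  · rw [Real.sign_of_pos h, abs_of_pos h]; ring

lemma abs_sign_le_one (x : ℝ) : |Real.sign x| ≤ 1 := by
  rcases lt_trichotomy x 0 with h|h|h
  · rw [Real.sign_of_neg h]; norm_num
  · simp [h]
  · rw [Real.sign_of_pos h]; norm_num

lemma part1 {n : ℕ} {q qs κ : ℝ} (hq : 2 < q) (hconj : 1 / q + 1 / qs = 1)
    (P : Matrix (Fin n) (Fin n) ℝ) (hsymm : P.IsSymm)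
    (hκ : opNorm q 2 P ≤ κ)
    {v : Fin n → ℝ} (hPv : P.mulVec v = v) :
    lpNorm qs v ≤ κ * lpNorm 2 v := by
  have hq0 : (0:ℝ) < q := by linarith
  have hq1 : (1:ℝ) < q := by linarith
  have hqsinv : 1 / qs = 1 - 1 / q := by linarith
  have hqsinv_pos : 0 < 1 / qs := by
    rw [hqsinv]; have : 1 / q < 1 := by rw [div_lt_one hq0]; linarith
    linarith
  have hqs0 : (0:ℝ) < qs := by
    by_contra h; push_neg at h
    have : 1 / qs ≤ 0 := div_nonpos_iff.mpr (Or.inl ⟨zero_le_one, h⟩)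
    linarith
  have hqs1 : (1:ℝ) < qs := by
    have h2 : 1 / qs < 1 := by
      rw [hqsinv]; have : 0 < 1 / q := by positivity
      linarith
    rw [div_lt_one hqs0] at h2; exact h2
  have hkey : (qs - 1) * q = qs := by
    have h := hconj
    field_simp at h
    linarith
  by_cases hv : v = 0
  · subst hv
    simp only [lpNorm, abs_zero, Pi.zero_apply]
    rw [Real.zero_rpow (ne_of_gt hqs0), Real.zero_rpow (by norm_num : (2:ℝ) ≠ 0)]
    simp only [Finset.sum_const, smul_zero]
    rw [Real.zero_rpow (ne_of_gt hqsinv_pos), Real.zero_rpow (by norm_num : 1/(2:ℝ) ≠ 0)]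
    simp
  -- main case
  obtain ⟨j, hj⟩ : ∃ j, v j ≠ 0 := by
    by_contra h; push_neg at h; exact hv (funext h)
  set u : Fin n → ℝ := fun i => |v i| ^ (qs - 1) * Real.sign (v i) with hu
  have huv : ∀ i, u i * v i = |v i| ^ qs := by
    intro i
    by_cases hvi : v i = 0
    · simp [hu, hvi, Real.zero_rpow (ne_of_gt hqs0),
        Real.zero_rpow (by linarith : qs - 1 ≠ 0)]
    · have habs : |v i| ≠ 0 := abs_ne_zero.mpr hvi
      calc u i * v i = |v i| ^ (qs - 1) * (Real.sign (v i) * v i) := by rw [hu]; ring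
        _ = |v i| ^ (qs - 1) * |v i| := by rw [mySign_mul_self]
        _ = |v i| ^ (qs - 1 + 1) := (Real.rpow_add_one habs _).symm
        _ = |v i| ^ qs := by ring_nf
  have hu_abs : ∀ i, |u i| ^ q ≤ |v i| ^ qs := by
    intro i
    have h1 : |u i| ≤ |v i| ^ (qs - 1) := by
      rw [hu]
      calc |(|v i| ^ (qs - 1) * Real.sign (v i))| = |v i| ^ (qs - 1) * |Real.sign (v i)| := by
            rw [abs_mul, abs_of_nonneg (Real.rpow_nonneg (abs_nonneg _) _)]
        _ ≤ |v i| ^ (qs - 1) * 1 :=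
            mul_le_mul_of_nonneg_left (abs_sign_le_one _) (Real.rpow_nonneg (abs_nonneg _) _)
        _ = |v i| ^ (qs - 1) := mul_one _
    calc |u i| ^ q ≤ (|v i| ^ (qs - 1)) ^ q :=
          Real.rpow_le_rpow (abs_nonneg _) h1 (le_of_lt hq0)
      _ = |v i| ^ ((qs - 1) * q) := (Real.rpow_mul (abs_nonneg _) _ _).symm
      _ = |v i| ^ qs := by rw [hkey]
  set s := ∑ i, |v i| ^ qs with hs
  have hs_pos : 0 < s := by
    rw [hs]
    have h1 : (0:ℝ) < |v j| ^ qs := Real.rpow_pos_of_pos (abs_pos.mpr hj) qs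
    calc (0:ℝ) < |v j| ^ qs := h1
      _ ≤ ∑ i, |v i| ^ qs :=
        Finset.single_le_sum (f := fun i => |v i| ^ qs) (fun i _ => by positivity)
          (Finset.mem_univ j)
  have hu_ne : u ≠ 0 := by
    intro h
    have h2 := congrFun h j
    simp only [hu, Pi.zero_apply] at h2
    have h3 : |v j| ^ (qs - 1) ≠ 0 :=
      ne_of_gt (Real.rpow_pos_of_pos (abs_pos.mpr hj) _)
    have h4 : Real.sign (v j) ≠ 0 := fun h0 => hj (Real.sign_eq_zero_iff.mp h0)
    exact (mul_ne_zero h3 h4) h2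
  have hPu := opNorm_apply_le hq0 P hκ hu_ne
  have hκ0 : 0 ≤ κ := by
    have h1 : 0 ≤ κ * lpNorm q u := le_trans (lpNorm_nonneg _ _) hPu
    nlinarith [lpNorm_pos hq0 hu_ne]
  -- chain
  have step1 : s = ∑ i, u i * P.mulVec v i := by
    rw [hPv, hs]
    exact (Finset.sum_congr rfl fun i _ => huv i).symm
  have step2 : ∑ i, u i * P.mulVec v i = ∑ i, P.mulVec u i * v i := by
    have h1 : u ⬝ᵥ P.mulVec v = P.vecMul u ⬝ᵥ v := Matrix.dotProduct_mulVec u P v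
    have h2 : P.vecMul u = P.mulVec u := by
      rw [← Matrix.mulVec_transpose, hsymm]
    simpa [dotProduct, h2] using h1
  have step3 : ∑ i, P.mulVec u i * v i ≤ lpNorm 2 (P.mulVec u) * lpNorm 2 v := by
    have hconj22 : Real.HolderConjugate 2 2 := ⟨by norm_num, by norm_num, by norm_num⟩
    exact Real.inner_le_Lp_mul_Lq Finset.univ _ _ hconj22
  have step5 : lpNorm q u ≤ s ^ (1/q) := by
    unfold lpNorm
    apply Real.rpow_le_rpow (Finset.sum_nonneg fun i _ => by positivity)
      (Finset.sum_le_sum fun i _ => hu_abs i) (by positivity)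
  have total : s ≤ κ * s ^ (1/q) * lpNorm 2 v := by
    calc s = ∑ i, u i * P.mulVec v i := step1
      _ = ∑ i, P.mulVec u i * v i := step2
      _ ≤ lpNorm 2 (P.mulVec u) * lpNorm 2 v := step3
      _ ≤ (κ * lpNorm q u) * lpNorm 2 v :=
          mul_le_mul_of_nonneg_right hPu (lpNorm_nonneg _ _)
      _ ≤ (κ * s ^ (1/q)) * lpNorm 2 v := by
          apply mul_le_mul_of_nonneg_right _ (lpNorm_nonneg _ _)
          exact mul_le_mul_of_nonneg_left step5 hκ0
  have hsplit : s ^ (1/qs) * s ^ (1/q) = s := by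
    rw [← Real.rpow_add hs_pos]
    rw [show 1/qs + 1/q = 1 by linarith, Real.rpow_one]
  have hfin : s ^ (1/qs) * s ^ (1/q) ≤ (κ * lpNorm 2 v) * s ^ (1/q) := by
    rw [hsplit]
    calc s ≤ κ * s ^ (1/q) * lpNorm 2 v := total
      _ = (κ * lpNorm 2 v) * s ^ (1/q) := by ring
  have := le_of_mul_le_mul_right hfin (Real.rpow_pos_of_pos hs_pos (1/q))
  exact this


set_option maxHeartbeats 1000000 in
theorem stmt6 {n : ℕ} (q qs : ℝ) (hq : 2 < q) (hconj : 1 / q + 1 / qs = 1)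
    (r : ℕ) (κ : ℝ) (P : Matrix (Fin n) (Fin n) ℝ)
    (hsymm : P.IsSymm) (hidem : P * P = P) (hrank : P.rank = r)
    (hκ : opNorm q 2 P ≤ κ) :
    (∀ v : Fin n → ℝ, (∃ w, P.mulVec w = v) → lpNorm qs v ≤ κ * lpNorm 2 v) ∧
    (∑ i, ∑ j, |P i j| ^ qs) ^ (1 / qs) ≤ (r : ℝ) * κ ^ 2 := by
  have hq0 : (0:ℝ) < q := by linarith
  have hqsinv : 1 / qs = 1 - 1 / q := by linarith
  have hqsinv_pos : 0 < 1 / qs := by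
    rw [hqsinv]; have : 1 / q < 1 := by rw [div_lt_one hq0]; linarith
    linarith
  have hqs0 : (0:ℝ) < qs := by
    by_contra h; push_neg at h
    have : 1 / qs ≤ 0 := div_nonpos_iff.mpr (Or.inl ⟨zero_le_one, h⟩)
    linarith
  have hqs1 : (1:ℝ) ≤ qs := by
    have h2 : 1 / qs < 1 := by
      rw [hqsinv]; have : 0 < 1 / q := by positivity
      linarith
    rw [div_lt_one hqs0] at h2; linarith
  have h1 : ∀ v : Fin n → ℝ, (∃ w, P.mulVec w = v) → lpNorm qs v ≤ κ * lpNorm 2 v := by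
    rintro v ⟨w, rfl⟩
    have hPv : P.mulVec (P.mulVec w) = P.mulVec w := by
      rw [Matrix.mulVec_mulVec, hidem]
    exact part1 hq hconj P hsymm hκ hPv
  refine ⟨h1, ?_⟩
  set c : Fin n → Fin n → ℝ := fun k i => P i k with hc
  have hPc : ∀ k, P.mulVec (c k) = c k := by
    intro k
    funext i
    show ∑ j, P i j * P j k = P i k
    rw [← Matrix.mul_apply, hidem]
  have hcol : ∀ k, lpNorm qs (c k) ≤ κ * lpNorm 2 (c k) := fun k => h1 _ ⟨c k, hPc k⟩
  have hLL : ∀ k, lpNorm 2 (c k) * lpNorm 2 (c k) = P k k := by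
    intro k
    unfold lpNorm
    set S := ∑ i, |c k i| ^ (2:ℝ) with hSdef
    have hS0 : 0 ≤ S := Finset.sum_nonneg fun i _ => by positivity
    have h2 : S ^ (1/(2:ℝ)) * S ^ (1/(2:ℝ)) = S := by
      rw [← Real.rpow_add' hS0 (by norm_num)]
      norm_num
    rw [h2, hSdef]
    have h3 : ∀ i, |c k i| ^ (2:ℝ) = P k i * P i k := by
      intro i
      rw [show (2:ℝ) = ((2:ℕ):ℝ) by norm_num, Real.rpow_natCast, sq_abs]
      rw [show c k i = P i k from rfl, sq, hsymm.apply i k]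
    rw [Finset.sum_congr rfl fun i _ => h3 i, ← Matrix.mul_apply, hidem]
  have perk : ∀ k : Fin n,
      (∑ p : Fin n × Fin n, |P p.1 k * P p.2 k| ^ qs) ^ (1/qs) ≤ κ ^ 2 * P k k := by
    intro k
    have hsum : (∑ p : Fin n × Fin n, |P p.1 k * P p.2 k| ^ qs)
        = (∑ i, |c k i| ^ qs) * (∑ j, |c k j| ^ qs) := by
      rw [Finset.sum_mul_sum]
      rw [Fintype.sum_prod_type]
      refine Finset.sum_congr rfl fun i _ => Finset.sum_congr rfl fun j _ => ?_
      rw [abs_mul, Real.mul_rpow (abs_nonneg _) (abs_nonneg _)]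
    have hSnn : 0 ≤ ∑ i, |c k i| ^ qs := Finset.sum_nonneg fun i _ => by positivity
    rw [hsum, Real.mul_rpow hSnn hSnn]
    have hlp : (∑ i, |c k i| ^ qs) ^ (1/qs) = lpNorm qs (c k) := rfl
    rw [hlp]
    calc lpNorm qs (c k) * lpNorm qs (c k)
        ≤ (κ * lpNorm 2 (c k)) * (κ * lpNorm 2 (c k)) :=
          mul_self_le_mul_self (lpNorm_nonneg _ _) (hcol k)
      _ = κ ^ 2 * (lpNorm 2 (c k) * lpNorm 2 (c k)) := by ring
      _ = κ ^ 2 * P k k := by rw [hLL k]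
  calc (∑ i, ∑ j, |P i j| ^ qs) ^ (1/qs)
      = (∑ p : Fin n × Fin n, |∑ k, P p.1 k * P p.2 k| ^ qs) ^ (1/qs) := by
        congr 1
        rw [Fintype.sum_prod_type]
        refine Finset.sum_congr rfl fun i _ => Finset.sum_congr rfl fun j _ => ?_
        congr 2
        rw [show P i j = (P * P) i j by rw [hidem], Matrix.mul_apply]
        exact Finset.sum_congr rfl fun k _ => by rw [hsymm.apply j k]
    _ ≤ ∑ k, (∑ p : Fin n × Fin n, |P p.1 k * P p.2 k| ^ qs) ^ (1/qs) := by
        have h := lp_sum_le (α := Fin n × Fin n) Finset.univ (fun k p => P p.1 k * P p.2 k) hqs1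
        convert h using 2
    _ ≤ ∑ k, κ ^ 2 * P k k := Finset.sum_le_sum fun k _ => perk k
    _ = κ ^ 2 * Matrix.trace P := by
        rw [Matrix.trace, Finset.mul_sum]
        rfl
    _ = κ ^ 2 * (P.rank : ℝ) := by rw [trace_eq_rank P hidem]
    _ = (r : ℝ) * κ ^ 2 := by rw [hrank]; ring
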